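/- Let θ_1,…,θ_n ∈ (0,π/2) with ∑_{i=1}^n θ_i = π. Then for all positive integers α, k with k ≥ 2, (∑_{i=1}^n csc θ_i)^{2α} − (n csc(π/n))^α (∑_{i=1}^n csc θ_i)^α ≤ (∑_{i=1}^n csc θ_i)^{kα} − (n csc(π/n))^{kα}, with equality if and only if θ_1 = ⋯ = θ_n = π/n. -/

import Mathlib

open Real

theorem csc_strictConvexOn : StrictConvexOn ℝ (Set.Ioo (0:ℝ) π) (fun x => 1 / Real.sin x) := by
  have hderiv : Set.EqOn (deriv fun y => 1 / Real.sin y)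
      (fun y => -Real.cos y / Real.sin y ^ 2) (Set.Ioo 0 π) := by
    intro y hy
    have hs : 0 < Real.sin y := Real.sin_pos_of_pos_of_lt_pi hy.1 hy.2
    have h1 : HasDerivAt (fun y => 1 / Real.sin y) (-Real.cos y / Real.sin y ^ 2) y := by
      have h := (Real.hasDerivAt_sin y).inv hs.ne'
      simp only [one_div]
      exact h
    exact h1.deriv
  apply strictConvexOn_of_deriv2_pos (convex_Ioo _ _)
  · exact ContinuousOn.div continuousOn_const Real.continuous_sin.continuousOn
      (fun x hx => (Real.sin_pos_of_pos_of_lt_pi hx.1 hx.2).ne')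
  · intro x hx
    rw [interior_Ioo] at hx
    have hs : 0 < Real.sin x := Real.sin_pos_of_pos_of_lt_pi hx.1 hx.2
    have heq : deriv (deriv fun y => 1 / Real.sin y) x
        = deriv (fun y => -Real.cos y / Real.sin y ^ 2) x := by
      apply Filter.EventuallyEq.deriv_eq
      exact Filter.eventuallyEq_of_mem (isOpen_Ioo.mem_nhds hx) hderiv
    have hnum : HasDerivAt (fun y => -Real.cos y) (Real.sin x) x := by
      have h := (Real.hasDerivAt_cos x).neg
      rw [neg_neg] at h
      exact h
    have hden : HasDerivAt (fun y => Real.sin y ^ 2) (2 * Real.sin x ^ 1 * Real.cos x) x :=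
      (Real.hasDerivAt_sin x).pow 2
    have h2 : HasDerivAt (fun y => -Real.cos y / Real.sin y ^ 2)
        ((Real.sin x * Real.sin x ^ 2 - (-Real.cos x) * (2 * Real.sin x ^ 1 * Real.cos x))
          / (Real.sin x ^ 2) ^ 2) x := hnum.div hden (pow_ne_zero 2 hs.ne')
    have : deriv^[2] (fun y => 1 / Real.sin y) x
        = (Real.sin x * Real.sin x ^ 2 - (-Real.cos x) * (2 * Real.sin x ^ 1 * Real.cos x))
          / (Real.sin x ^ 2) ^ 2 := by
      simp only [Function.iterate_succ, Function.iterate_zero, Function.comp_apply, id]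
      rw [heq, h2.deriv]
    rw [this]
    apply div_pos
    · nlinarith [pow_pos hs 3, mul_nonneg hs.le (sq_nonneg (Real.cos x))]
    · positivity

theorem key_alg {b s : ℝ} (hb : 1 < b) (hbs : b ≤ s) {k : ℕ} (hk : 2 ≤ k) :
    s ^ 2 - b * s ≤ s ^ k - b ^ k ∧ (s ^ 2 - b * s = s ^ k - b ^ k ↔ b = s) := by
  obtain ⟨j, rfl⟩ : ∃ j, k = j + 2 := ⟨k - 2, by omega⟩
  rcases eq_or_lt_of_le hbs with h | h
  · subst h
    constructor
    · nlinarith [sq_nonneg b]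
    · constructor
      · intro _; rfl
      · intro _; ring
  · have hb0 : 0 < b := lt_trans one_pos hb
    have hs1 : 1 < s := lt_trans hb h
    have hA : b ^ (j + 1) < s ^ (j + 1) := pow_lt_pow_left₀ h hb0.le (by omega)
    have hB : s ≤ s ^ (j + 1) := by
      calc s = s ^ 1 := (pow_one s).symm
        _ ≤ s ^ (j + 1) := pow_le_pow_right₀ hs1.le (by omega)
    have e1 : b ^ (j + 1) * b < s ^ (j + 1) * b := mul_lt_mul_of_pos_right hA hb0
    have e2 : s * (s - b) ≤ s ^ (j + 1) * (s - b) :=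
      mul_le_mul_of_nonneg_right hB (sub_pos.2 h).le
    have hstrict : s ^ 2 - b * s < s ^ (j + 2) - b ^ (j + 2) := by
      rw [pow_succ s (j+1), pow_succ b (j+1)]
      nlinarith [e1, e2]
    exact ⟨hstrict.le, by constructor; · intro he; linarith
                          · intro he; exact absurd he h.ne⟩

open Real in
theorem stmt9 (n : ℕ) (hn : 3 ≤ n)
    (θ : Fin n → ℝ) (hθ : ∀ i, θ i ∈ Set.Ioo (0:ℝ) (π / 2))
    (hsum : ∑ i, θ i = π) (α k : ℕ) (hα : 0 < α) (hk : 2 ≤ k) :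
    (∑ i, 1 / sin (θ i)) ^ (2 * α)
        - ((n : ℝ) * (1 / sin (π / n))) ^ α * (∑ i, 1 / sin (θ i)) ^ α
      ≤ (∑ i, 1 / sin (θ i)) ^ (k * α) - ((n : ℝ) * (1 / sin (π / n))) ^ (k * α)
    ∧ ((∑ i, 1 / sin (θ i)) ^ (2 * α)
          - ((n : ℝ) * (1 / sin (π / n))) ^ α * (∑ i, 1 / sin (θ i)) ^ α
        = (∑ i, 1 / sin (θ i)) ^ (k * α) - ((n : ℝ) * (1 / sin (π / n))) ^ (k * α)
      ↔ ∀ i, θ i = π / n) := by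
  have hn0 : (0:ℝ) < n := by exact_mod_cast (by omega : 0 < n)
  have hn1 : (1:ℝ) < n := by exact_mod_cast (by omega : 1 < n)
  have hπn : π / n ∈ Set.Ioo (0:ℝ) π := ⟨by positivity, div_lt_self pi_pos hn1⟩
  have hθ' : ∀ i, θ i ∈ Set.Ioo (0:ℝ) π :=
    fun i => ⟨(hθ i).1, lt_trans (hθ i).2 (by linarith [pi_pos])⟩
  set S := ∑ i, 1 / sin (θ i) with hS
  set c := (n : ℝ) * (1 / sin (π / n)) with hc
  have hsinpos : 0 < Real.sin (π / n) := Real.sin_pos_of_pos_of_lt_pi hπn.1 hπn.2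
  -- Jensen setup
  have hw1 : ∑ _i : Fin n, (1:ℝ) / n = 1 := by
    rw [Finset.sum_const, Finset.card_univ, Fintype.card_fin, nsmul_eq_mul]
    field_simp
  have hmean : ∑ i : Fin n, ((1:ℝ)/n) • θ i = π / n := by
    simp only [smul_eq_mul, ← Finset.mul_sum, hsum]
    ring
  have h₀ : ∀ i ∈ (Finset.univ : Finset (Fin n)), (0:ℝ) < 1 / n := fun _ _ => by positivity
  have hmem : ∀ i ∈ (Finset.univ : Finset (Fin n)), θ i ∈ Set.Ioo (0:ℝ) π := fun i _ => hθ' i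
  have hJ := csc_strictConvexOn.convexOn.map_sum_le (fun i hi => (h₀ i hi).le) hw1 hmem
  rw [hmean] at hJ
  simp only [smul_eq_mul] at hJ
  rw [← Finset.mul_sum] at hJ
  -- hJ : 1 / sin (π/n) ≤ 1/n * S
  have hcS : c ≤ S := by
    have := mul_le_mul_of_nonneg_left hJ hn0.le
    rw [hc]
    calc (n:ℝ) * (1 / sin (π/n)) ≤ n * (1/n * S) := this
      _ = S := by field_simp
  have heqiff : S = c ↔ ∀ i, θ i = π / n := by
    have hiff := csc_strictConvexOn.map_sum_eq_iff h₀ hw1 hmem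
    rw [hmean] at hiff
    simp only [smul_eq_mul] at hiff
    rw [← Finset.mul_sum] at hiff
    constructor
    · intro hSc
      intro i
      have : (fun x => 1 / Real.sin x) (π/n) = 1/n * S := by
        simp only [hSc, hc]
        field_simp
      exact hiff.1 this i (Finset.mem_univ i)
    · intro hall
      have : (fun x => 1 / Real.sin x) (π/n) = 1/n * S :=
        hiff.2 (fun j _ => hall j)
      simp only at this
      rw [hc, this]
      field_simp
  have hc1 : 1 < c := by
    have h1 : 1 ≤ 1 / Real.sin (π/n) := one_le_one_div hsinpos (Real.sin_le_one _)
    rw [hc]; nlinarith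
  have hb1 : 1 < c ^ α := one_lt_pow₀ hc1 hα.ne'
  have hbs : c ^ α ≤ S ^ α := pow_le_pow_left₀ (by linarith) hcS α
  obtain ⟨hle, hiff2⟩ := key_alg hb1 hbs hk
  have hrw1 : S ^ (2 * α) = (S ^ α) ^ 2 := by rw [mul_comm, pow_mul]
  have hrw2 : S ^ (k * α) = (S ^ α) ^ k := by rw [mul_comm, pow_mul]
  have hrw3 : c ^ (k * α) = (c ^ α) ^ k := by rw [mul_comm, pow_mul]
  rw [hrw1, hrw2, hrw3]
  refine ⟨hle, ?_⟩
  rw [hiff2, ← heqiff]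
  constructor
  · intro h
    rcases eq_or_lt_of_le hcS with h' | h'
    · exact h'.symm
    · exact absurd h (pow_lt_pow_left₀ h' (by linarith) hα.ne').ne
  · intro h; rw [h]
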